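/- There exists a function π : H → ℤ such that (i) π(t^p · b^q · ι(w)) = q for all p, q ∈ ℤ and all w ∈ F₂ not beginning with b^{±1}, and (ii) π is 1-Lipschitz with respect to the word metric on the generating set {a, b, t}: for every h ∈ H and every s ∈ {a, b, t, a⁻¹, b⁻¹, t⁻¹} ⊆ H, |π(h·s) − π(h)| ≤ 1. -/

import Mathlib

/-- Generators of `H`: `a = 0`, `b = 1`, `t = 2`.
Relators: `t·b·t⁻¹·b⁻¹` and `t·a·t⁻¹·a⁻¹·b⁻¹`. -/
def hRels : Set (FreeGroup (Fin 3)) :=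
  { FreeGroup.of (2 : Fin 3) * FreeGroup.of (1 : Fin 3) * (FreeGroup.of (2 : Fin 3))⁻¹ *
      (FreeGroup.of (1 : Fin 3))⁻¹,
    FreeGroup.of (2 : Fin 3) * FreeGroup.of (0 : Fin 3) * (FreeGroup.of (2 : Fin 3))⁻¹ *
      (FreeGroup.of (0 : Fin 3))⁻¹ * (FreeGroup.of (1 : Fin 3))⁻¹ }

/-- The group `H = ⟨a, b, t ∣ t·b·t⁻¹ = b, t·a·t⁻¹ = b·a⟩`. -/
abbrev HGrp : Type := PresentedGroup hRels

/-- The image of the generator `a` in `H`. -/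
def aH : HGrp := PresentedGroup.of 0
/-- The image of the generator `b` in `H`. -/
def bH : HGrp := PresentedGroup.of 1
/-- The image of the generator `t` in `H`. -/
def tH : HGrp := PresentedGroup.of 2

/-- The free group on two generators `a = 0`, `b = 1`. -/
abbrev F₂ : Type := FreeGroup (Fin 2)

/-- `w ∈ F₂` does not begin with `b` or `b⁻¹`: the first letter of its reduced word
(if any) is not the generator `b = 1`. -/
def NoLeadB (w : F₂) : Prop := ∀ l ∈ w.toWord.head?, l.1 ≠ (1 : Fin 2)

/-- The homomorphism `ι : F₂ →* H` sending the generators `a`, `b` of `F₂` to the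
elements `a`, `b` of `H`. -/
def ι : F₂ →* HGrp := FreeGroup.lift (fun i => if i = 0 then aH else bH)



open FreeGroup

/-- Signed length of the leading run of `b`-letters. -/
def qW : List (Fin 2 × Bool) → ℤ
  | [] => 0
  | (i, s) :: l => if i = 1 then (if s then qW l + 1 else qW l - 1) else 0

def qF (w : F₂) : ℤ := qW w.toWord

lemma qW_nil : qW [] = 0 := rfl
lemma qW_bt (l) : qW (((1 : Fin 2), true) :: l) = qW l + 1 := by simp [qW]
lemma qW_bf (l) : qW (((1 : Fin 2), false) :: l) = qW l - 1 := by simp [qW]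
lemma qW_a (s l) : qW (((0 : Fin 2), s) :: l) = 0 := by simp [qW]

lemma qW_append_single (l : List (Fin 2 × Bool)) (x : Fin 2 × Bool) :
    |qW (l ++ [x]) - qW l| ≤ 1 := by
  induction l with
  | nil =>
    obtain ⟨i, s⟩ := x
    fin_cases i <;> cases s <;> simp [qW]
  | cons y l ih =>
    obtain ⟨i, s⟩ := y
    fin_cases i <;> cases s <;> simpa [qW] using ih

lemma reduce_cons_nil {x : Fin 2 × Bool} {l : List (Fin 2 × Bool)} (hm : reduce l = []) :
    reduce (x :: l) = [x] := by
  rw [FreeGroup.reduce.cons, hm]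

lemma reduce_cons_cons {x y : Fin 2 × Bool} {l t : List (Fin 2 × Bool)}
    (hm : reduce l = y :: t) :
    reduce (x :: l) = if x.1 = y.1 ∧ x.2 = !y.2 then t else x :: y :: t := by
  rw [FreeGroup.reduce.cons, hm]

lemma reduce_length_le (l : List (Fin 2 × Bool)) : (reduce l).length ≤ l.length :=
  FreeGroup.Red.length_le (FreeGroup.reduce.red)

lemma reduce_tail {x : Fin 2 × Bool} {l : List (Fin 2 × Bool)}
    (h : reduce (x :: l) = x :: l) : reduce l = l := by
  rcases hm : reduce l with _ | ⟨y, t⟩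
  · have hc : reduce (x :: l) = [x] := reduce_cons_nil hm
    rw [hc] at h
    injection h with h1 h2
  · have hc : reduce (x :: l) = if x.1 = y.1 ∧ x.2 = !y.2 then t else x :: y :: t :=
      reduce_cons_cons hm
    by_cases hcan : x.1 = y.1 ∧ x.2 = !y.2
    · rw [if_pos hcan] at hc
      rw [hc] at h
      have h1 : t.length ≤ l.length := by
        have := reduce_length_le l
        rw [hm] at this; simpa using Nat.le_of_succ_le this
      rw [h] at h1
      simp at h1
    · rw [if_neg hcan] at hc
      rw [hc] at h
      injection h with h1 h2

lemma reduce_nocancel {x y : Fin 2 × Bool} {l : List (Fin 2 × Bool)}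
    (h : reduce (x :: y :: l) = x :: y :: l) : ¬(x.1 = y.1 ∧ x.2 = !y.2) := by
  intro hcan
  have ht : reduce (y :: l) = y :: l := reduce_tail h
  have hc : reduce (x :: y :: l) = if x.1 = y.1 ∧ x.2 = !y.2 then l else x :: y :: l :=
    reduce_cons_cons ht
  rw [if_pos hcan] at hc
  rw [hc] at h
  have : l.length = l.length + 2 := by
    conv_lhs => rw [h]
    simp
  omega

lemma reduce_append_single (l : List (Fin 2 × Bool)) (x : Fin 2 × Bool)
    (h : reduce l = l) :
    reduce (l ++ [x]) = l ++ [x] ∨ reduce (l ++ [x]) = l.dropLast := by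
  induction l with
  | nil => left; rfl
  | cons y l ih =>
    have hl : reduce l = l := reduce_tail h
    cases l with
    | nil =>
      have hc : reduce (y :: [x]) = if y.1 = x.1 ∧ y.2 = !x.2 then [] else y :: x :: [] :=
        reduce_cons_cons (FreeGroup.reduce_singleton x)
      by_cases hcan : y.1 = x.1 ∧ y.2 = !x.2
      · right
        show reduce (y :: [x]) = _
        rw [hc, if_pos hcan]; rfl
      · left
        show reduce (y :: [x]) = _
        rw [hc, if_neg hcan]
        rfl
    | cons z t =>
      have hnc : ¬(y.1 = z.1 ∧ y.2 = !z.2) := reduce_nocancel h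
      rcases ih hl with h1 | h1
      · left
        have h1' : reduce (z :: (t ++ [x])) = z :: (t ++ [x]) := by
          simpa using h1
        have hc : reduce (y :: (z :: (t ++ [x]))) =
            if y.1 = z.1 ∧ y.2 = !z.2 then t ++ [x] else y :: z :: (t ++ [x]) :=
          reduce_cons_cons h1'
        show reduce (y :: (z :: (t ++ [x]))) = _
        rw [hc, if_neg hnc]
        simp
      · right
        cases t with
        | nil =>
          have h1' : reduce (z :: ([x])) = [] := by simpa using h1
          have hc : reduce (y :: (z :: [x])) = [y] := reduce_cons_nil h1'
          show reduce (y :: (z :: [x])) = _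
          rw [hc]
          rfl
        | cons w t' =>
          have h1' : reduce (z :: (w :: t' ++ [x])) = z :: (w :: t').dropLast := by
            simpa using h1
          have hc : reduce (y :: (z :: (w :: t' ++ [x]))) =
              if y.1 = z.1 ∧ y.2 = !z.2 then (w :: t').dropLast
              else y :: z :: (w :: t').dropLast :=
            reduce_cons_cons h1'
          show reduce (y :: (z :: (w :: t' ++ [x]))) = _
          rw [hc, if_neg hnc]
          rfl

lemma toWord_mk_single_mul (y : Fin 2 × Bool) (v : F₂) :
    (FreeGroup.mk [y] * v).toWord = reduce (y :: v.toWord) := by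
  conv_lhs => rw [← FreeGroup.mk_toWord (x := v)]
  rw [FreeGroup.mul_mk, FreeGroup.toWord_mk]
  rfl

lemma single_mul_toWord_nocancel (y : Fin 2 × Bool) (v : F₂)
    (h : ∀ z ∈ v.toWord.head?, ¬(y.1 = z.1 ∧ y.2 = !z.2)) :
    (FreeGroup.mk [y] * v).toWord = y :: v.toWord := by
  rw [toWord_mk_single_mul]
  rcases hm : v.toWord with _ | ⟨z, t⟩
  · exact reduce_cons_nil (by rw [← hm]; exact FreeGroup.reduce_toWord v)
  · have hr : reduce (z :: t) = z :: t := by rw [← hm]; exact FreeGroup.reduce_toWord v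
    rw [reduce_cons_cons hr, if_neg (h z (by rw [hm]; rfl))]

lemma single_mul_toWord_cancel (y z : Fin 2 × Bool) (t : List (Fin 2 × Bool)) (v : F₂)
    (hm : v.toWord = z :: t) (hz : y.1 = z.1 ∧ y.2 = !z.2) :
    (FreeGroup.mk [y] * v).toWord = t := by
  rw [toWord_mk_single_mul, hm]
  have hr : reduce (z :: t) = z :: t := by rw [← hm]; exact FreeGroup.reduce_toWord v
  rw [reduce_cons_cons hr, if_pos hz]

lemma qF_b_mul (v : F₂) : qF (FreeGroup.of (1 : Fin 2) * v) = qF v + 1 := by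
  unfold qF
  rw [show FreeGroup.of (1 : Fin 2) = FreeGroup.mk [((1:Fin 2), true)] from rfl,
    toWord_mk_single_mul]
  rcases hm : v.toWord with _ | ⟨⟨i, s⟩, t⟩
  · have : reduce [((1:Fin 2), true)] = [((1:Fin 2), true)] := rfl
    simp [this, qW]
  · have hr : reduce ((i, s) :: t) = (i, s) :: t := by
      rw [← hm]; exact FreeGroup.reduce_toWord v
    rw [reduce_cons_cons hr]
    fin_cases i <;> cases s <;> simp [qW] <;> omega

lemma qF_binv_mul (v : F₂) : qF ((FreeGroup.of (1 : Fin 2))⁻¹ * v) = qF v - 1 := by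
  unfold qF
  have hinv : (FreeGroup.of (1 : Fin 2))⁻¹ = FreeGroup.mk [((1:Fin 2), false)] := by
    rw [show FreeGroup.of (1 : Fin 2) = FreeGroup.mk [((1:Fin 2), true)] from rfl,
      FreeGroup.inv_mk]
    rfl
  rw [hinv, toWord_mk_single_mul]
  rcases hm : v.toWord with _ | ⟨⟨i, s⟩, t⟩
  · have : reduce [((1:Fin 2), false)] = [((1:Fin 2), false)] := rfl
    simp [this, qW]
  · have hr : reduce ((i, s) :: t) = (i, s) :: t := by
      rw [← hm]; exact FreeGroup.reduce_toWord v
    rw [reduce_cons_cons hr]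
    fin_cases i <;> cases s <;> simp [qW] <;> omega

lemma qF_bpow_mul (k : ℤ) (v : F₂) : qF (FreeGroup.of (1 : Fin 2) ^ k * v) = k + qF v := by
  induction k using Int.induction_on generalizing v with
  | zero => simp
  | succ k ih =>
    have : FreeGroup.of (1 : Fin 2) ^ ((k : ℤ) + 1) * v
        = FreeGroup.of (1 : Fin 2) ^ (k : ℤ) * (FreeGroup.of (1 : Fin 2) * v) := by
      rw [zpow_add_one]; group
    rw [this, ih, qF_b_mul]; ring
  | pred k ih =>
    have : FreeGroup.of (1 : Fin 2) ^ (-(k : ℤ) - 1) * v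
        = FreeGroup.of (1 : Fin 2) ^ (-(k : ℤ)) * ((FreeGroup.of (1 : Fin 2))⁻¹ * v) := by
      rw [zpow_sub_one]; group
    rw [this, ih, qF_binv_mul]; ring

lemma qF_mul_single (v : F₂) (x : Fin 2 × Bool) :
    |qF (v * FreeGroup.mk [x]) - qF v| ≤ 1 := by
  have hv : v * FreeGroup.mk [x] = FreeGroup.mk (v.toWord ++ [x]) := by
    conv_lhs => rw [← FreeGroup.mk_toWord (x := v)]
    rw [FreeGroup.mul_mk]
  rw [hv]
  unfold qF
  rw [FreeGroup.toWord_mk]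
  rcases reduce_append_single v.toWord x (FreeGroup.reduce_toWord v) with h | h
  · rw [h]; exact qW_append_single _ _
  · rw [h]
    rcases List.eq_nil_or_concat v.toWord with hn | ⟨L, b, hL⟩
    · rw [hn]; simp
    · rw [hL, List.concat_eq_append, List.dropLast_concat]
      rw [abs_sub_comm]
      exact qW_append_single L b

def f0 : F₂ →* F₂ :=
  FreeGroup.lift (fun i => if i = 0 then FreeGroup.of 1 * FreeGroup.of 0 else FreeGroup.of 1)

def g0 : F₂ →* F₂ :=
  FreeGroup.lift (fun i => if i = 0 then (FreeGroup.of 1)⁻¹ * FreeGroup.of 0 else FreeGroup.of 1)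

lemma mk_single_true (i : Fin 2) : FreeGroup.mk [(i, true)] = FreeGroup.of i := rfl

lemma mk_single_false (i : Fin 2) : FreeGroup.mk [(i, false)] = (FreeGroup.of i)⁻¹ := by
  rw [← mk_single_true, FreeGroup.inv_mk]; rfl

lemma g0_comp_f0 : g0.comp f0 = MonoidHom.id F₂ := by
  apply FreeGroup.ext_hom
  intro a
  fin_cases a <;> simp [f0, g0]

lemma f0_comp_g0 : f0.comp g0 = MonoidHom.id F₂ := by
  apply FreeGroup.ext_hom
  intro a
  fin_cases a <;> simp [f0, g0]

lemma g0_f0 (w : F₂) : g0 (f0 w) = w := by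
  have := congrArg (fun φ => φ w) g0_comp_f0; simpa using this

lemma f0_g0 (w : F₂) : f0 (g0 w) = w := by
  have := congrArg (fun φ => φ w) f0_comp_g0; simpa using this

-- abbreviations for the four letters
private abbrev aT : Fin 2 × Bool := ((0 : Fin 2), true)
private abbrev aF : Fin 2 × Bool := ((0 : Fin 2), false)
private abbrev bT : Fin 2 × Bool := ((1 : Fin 2), true)
private abbrev bF : Fin 2 × Bool := ((1 : Fin 2), false)

lemma f0_MaT : f0 (FreeGroup.mk [aT]) = FreeGroup.mk [bT] * FreeGroup.mk [aT] := by
  simp only [mk_single_true]; simp [f0]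

lemma f0_MaF : f0 (FreeGroup.mk [aF]) = FreeGroup.mk [aF] * FreeGroup.mk [bF] := by
  simp only [mk_single_false]
  rw [MonoidHom.map_inv]
  simp [f0, mul_inv_rev]

lemma f0_MbT : f0 (FreeGroup.mk [bT]) = FreeGroup.mk [bT] := by
  rw [mk_single_true]; simp [f0]

lemma f0_MbF : f0 (FreeGroup.mk [bF]) = FreeGroup.mk [bF] := by
  simp only [mk_single_false]
  rw [MonoidHom.map_inv]; simp [f0]

lemma prepend_word (y c : Fin 2 × Bool) (t : List (Fin 2 × Bool)) (v : F₂)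
    (hv : v.toWord = c :: t) (hnc : ¬(y.1 = c.1 ∧ y.2 = !c.2)) :
    (FreeGroup.mk [y] * v).toWord = y :: c :: t := by
  rw [single_mul_toWord_nocancel y v (by intro z hz; rw [hv] at hz; simp at hz; subst hz; exact hnc), hv]

lemma prepend_nil (y : Fin 2 × Bool) (v : F₂) (hv : v.toWord = []) :
    (FreeGroup.mk [y] * v).toWord = [y] := by
  rw [single_mul_toWord_nocancel y v (by intro z hz; rw [hv] at hz; simp at hz), hv]

lemma word_decomp {u : F₂} {x : Fin 2 × Bool} {l : List (Fin 2 × Bool)}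
    (hm : u.toWord = x :: l) :
    u = FreeGroup.mk [x] * FreeGroup.mk l ∧ (FreeGroup.mk l).toWord = l := by
  have hred : reduce (x :: l) = x :: l := by rw [← hm]; exact FreeGroup.reduce_toWord u
  have hl : reduce l = l := reduce_tail hred
  constructor
  · rw [FreeGroup.mul_mk, show [x] ++ l = x :: l from rfl, ← hm, FreeGroup.mk_toWord]
  · rw [FreeGroup.toWord_mk, hl]

lemma f0_word : ∀ (n : ℕ) (u : F₂), u.toWord.length ≤ n →
    ((∃ l, u.toWord = aT :: l) → ∃ r, (f0 u).toWord = bT :: aT :: r) ∧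
    ((∃ l, u.toWord = aF :: l) → ∃ r, (f0 u).toWord = aF :: r) ∧
    ((∃ l, u.toWord = bT :: l) → ∃ r, (f0 u).toWord = bT :: r) ∧
    ((∃ l, u.toWord = bF :: l) →
       ∃ r, (f0 u).toWord = aT :: r ∨ (f0 u).toWord = bF :: r) := by
  intro n
  induction n with
  | zero =>
    intro u h
    refine ⟨?_, ?_, ?_, ?_⟩ <;> rintro ⟨l, hl⟩ <;> rw [hl] at h <;> simp at h
  | succ n ih =>
    intro u hlen
    rcases hm : u.toWord with _ | ⟨x, l⟩
    · refine ⟨?_, ?_, ?_, ?_⟩ <;> rintro ⟨l₀, hl₀⟩ <;> simp at hl₀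
    · obtain ⟨hu, hu'w⟩ := word_decomp hm
      have hred : reduce (x :: l) = x :: l := by rw [← hm]; exact FreeGroup.reduce_toWord u
      have hlen' : l.length ≤ n := by rw [hm] at hlen; simpa using hlen
      set u' : F₂ := FreeGroup.mk l with hu'def
      refine ⟨?_, ?_, ?_, ?_⟩ <;> rintro ⟨l₀, hl₀⟩ <;>
        injection hl₀ with hx hl₀' <;> subst hx <;> subst hl₀'
      -- case x = aT
      · have hf : f0 u = FreeGroup.mk [bT] * (FreeGroup.mk [aT] * f0 u') := by
          rw [hu, MonoidHom.map_mul, f0_MaT, mul_assoc]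
        rcases hl : l with _ | ⟨⟨zi, zs⟩, t⟩
        · have hone : u' = 1 := by
            rw [hu'def, hl]; rfl
          rw [hf, hone, MonoidHom.map_one]
          refine ⟨[], ?_⟩
          rw [prepend_word bT aT [] _ (prepend_nil aT 1 FreeGroup.toWord_one) (by decide)]
        · subst hl
          have hnc1 : ¬(aT.1 = (zi, zs).1 ∧ aT.2 = !(zi, zs).2) := reduce_nocancel hred
          have hu't : u'.toWord = (zi, zs) :: t := hu'w
          fin_cases zi <;> cases zs
          -- z = aF : impossible
          · exact absurd (by decide) hnc1
          -- z = aT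
          · obtain ⟨r, hr⟩ := (ih u' (by rw [hu't]; simpa using hlen')).1 ⟨t, hu't⟩
            refine ⟨bT :: aT :: r, ?_⟩
            rw [hf, prepend_word bT aT _ _ (prepend_word aT bT _ _ hr (by decide)) (by decide)]
          -- z = bF
          · obtain ⟨r, hr⟩ := (ih u' (by rw [hu't]; simpa using hlen')).2.2.2 ⟨t, hu't⟩
            rcases hr with hr | hr
            · refine ⟨aT :: r, ?_⟩
              rw [hf, prepend_word bT aT _ _ (prepend_word aT aT _ _ hr (by decide)) (by decide)]
            · refine ⟨bF :: r, ?_⟩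
              rw [hf, prepend_word bT aT _ _ (prepend_word aT bF _ _ hr (by decide)) (by decide)]
          -- z = bT
          · obtain ⟨r, hr⟩ := (ih u' (by rw [hu't]; simpa using hlen')).2.2.1 ⟨t, hu't⟩
            refine ⟨bT :: r, ?_⟩
            rw [hf, prepend_word bT aT _ _ (prepend_word aT bT _ _ hr (by decide)) (by decide)]
      -- case x = aF
      · have hf : f0 u = FreeGroup.mk [aF] * (FreeGroup.mk [bF] * f0 u') := by
          rw [hu, MonoidHom.map_mul, f0_MaF, mul_assoc]
        rcases hl : l with _ | ⟨⟨zi, zs⟩, t⟩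
        · have hone : u' = 1 := by rw [hu'def, hl]; rfl
          rw [hf, hone, MonoidHom.map_one]
          refine ⟨[bF], ?_⟩
          rw [prepend_word aF bF [] _ (prepend_nil bF 1 FreeGroup.toWord_one) (by decide)]
        · subst hl
          have hnc1 : ¬(aF.1 = (zi, zs).1 ∧ aF.2 = !(zi, zs).2) := reduce_nocancel hred
          have hu't : u'.toWord = (zi, zs) :: t := hu'w
          fin_cases zi <;> cases zs
          -- z = aF
          · obtain ⟨r, hr⟩ := (ih u' (by rw [hu't]; simpa using hlen')).2.1 ⟨t, hu't⟩
            refine ⟨bF :: aF :: r, ?_⟩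
            rw [hf, prepend_word aF bF _ _ (prepend_word bF aF _ _ hr (by decide)) (by decide)]
          -- z = aT : impossible
          · exact absurd (by decide) hnc1
          -- z = bF
          · obtain ⟨r, hr⟩ := (ih u' (by rw [hu't]; simpa using hlen')).2.2.2 ⟨t, hu't⟩
            rcases hr with hr | hr
            · refine ⟨bF :: aT :: r, ?_⟩
              rw [hf, prepend_word aF bF _ _ (prepend_word bF aT _ _ hr (by decide)) (by decide)]
            · refine ⟨bF :: bF :: r, ?_⟩
              rw [hf, prepend_word aF bF _ _ (prepend_word bF bF _ _ hr (by decide)) (by decide)]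
          -- z = bT : the cancellation case
          · have hredl : reduce (bT :: t) = bT :: t := reduce_tail hred
            obtain ⟨hu'2, hu''w⟩ := word_decomp (show u'.toWord = bT :: t from hu't)
            set u'' : F₂ := FreeGroup.mk t with hu''def
            have hlen'' : u''.toWord.length ≤ n := by
              rw [hu''w]
              have : t.length + 1 ≤ n := by simpa using hlen'
              omega
            have hcanc : FreeGroup.mk [bF] * f0 u' = f0 u'' := by
              rw [hu'2, MonoidHom.map_mul, f0_MbT, ← mul_assoc, mk_single_false, mk_single_true,
                inv_mul_cancel, one_mul]
            rw [hf, hcanc]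
            -- now need : ∃ r, (mk [aF] * f0 u'').toWord = aF :: r
            rcases ht : t with _ | ⟨⟨wi, ws⟩, t'⟩
            · have hone : u'' = 1 := by rw [hu''def, ht]; rfl
              rw [hone, MonoidHom.map_one]
              exact ⟨[], prepend_nil aF 1 FreeGroup.toWord_one⟩
            · subst ht
              have hnc2 : ¬(bT.1 = (wi, ws).1 ∧ bT.2 = !(wi, ws).2) := reduce_nocancel hredl
              have hu''t : u''.toWord = (wi, ws) :: t' := hu''w
              fin_cases wi <;> cases ws
              · obtain ⟨r, hr⟩ := (ih u'' (le_trans (le_of_eq (by rw [hu''t])) hlen'')).2.1 ⟨t', hu''t⟩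
                exact ⟨aF :: r, prepend_word aF aF _ _ hr (by decide)⟩
              · obtain ⟨r, hr⟩ := (ih u'' (le_trans (le_of_eq (by rw [hu''t])) hlen'')).1 ⟨t', hu''t⟩
                exact ⟨bT :: aT :: r, prepend_word aF bT _ _ hr (by decide)⟩
              · exact absurd (by decide) hnc2
              · obtain ⟨r, hr⟩ := (ih u'' (le_trans (le_of_eq (by rw [hu''t])) hlen'')).2.2.1 ⟨t', hu''t⟩
                exact ⟨bT :: r, prepend_word aF bT _ _ hr (by decide)⟩
      -- case x = bT
      · have hf : f0 u = FreeGroup.mk [bT] * f0 u' := by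
          rw [hu, MonoidHom.map_mul, f0_MbT]
        rcases hl : l with _ | ⟨⟨zi, zs⟩, t⟩
        · have hone : u' = 1 := by rw [hu'def, hl]; rfl
          rw [hf, hone, MonoidHom.map_one]
          exact ⟨[], prepend_nil bT 1 FreeGroup.toWord_one⟩
        · subst hl
          have hnc1 : ¬(bT.1 = (zi, zs).1 ∧ bT.2 = !(zi, zs).2) := reduce_nocancel hred
          have hu't : u'.toWord = (zi, zs) :: t := hu'w
          fin_cases zi <;> cases zs
          · obtain ⟨r, hr⟩ := (ih u' (by rw [hu't]; simpa using hlen')).2.1 ⟨t, hu't⟩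
            exact ⟨aF :: r, by rw [hf, prepend_word bT aF _ _ hr (by decide)]⟩
          · obtain ⟨r, hr⟩ := (ih u' (by rw [hu't]; simpa using hlen')).1 ⟨t, hu't⟩
            exact ⟨bT :: aT :: r, by rw [hf, prepend_word bT bT _ _ hr (by decide)]⟩
          · exact absurd (by decide) hnc1
          · obtain ⟨r, hr⟩ := (ih u' (by rw [hu't]; simpa using hlen')).2.2.1 ⟨t, hu't⟩
            exact ⟨bT :: r, by rw [hf, prepend_word bT bT _ _ hr (by decide)]⟩
      -- case x = bF
      · have hf : f0 u = FreeGroup.mk [bF] * f0 u' := by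
          rw [hu, MonoidHom.map_mul, f0_MbF]
        rcases hl : l with _ | ⟨⟨zi, zs⟩, t⟩
        · have hone : u' = 1 := by rw [hu'def, hl]; rfl
          rw [hf, hone, MonoidHom.map_one]
          exact ⟨[], Or.inr (prepend_nil bF 1 FreeGroup.toWord_one)⟩
        · subst hl
          have hnc1 : ¬(bF.1 = (zi, zs).1 ∧ bF.2 = !(zi, zs).2) := reduce_nocancel hred
          have hu't : u'.toWord = (zi, zs) :: t := hu'w
          fin_cases zi <;> cases zs
          · obtain ⟨r, hr⟩ := (ih u' (by rw [hu't]; simpa using hlen')).2.1 ⟨t, hu't⟩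
            exact ⟨aF :: r, Or.inr (by rw [hf, prepend_word bF aF _ _ hr (by decide)])⟩
          · obtain ⟨r, hr⟩ := (ih u' (by rw [hu't]; simpa using hlen')).1 ⟨t, hu't⟩
            -- cancellation: bF * (bT :: aT :: r) = aT :: r
            refine ⟨r, Or.inl ?_⟩
            rw [hf, single_mul_toWord_cancel bF bT (aT :: r) (f0 u') hr (by decide)]
          · obtain ⟨r, hr⟩ := (ih u' (by rw [hu't]; simpa using hlen')).2.2.2 ⟨t, hu't⟩
            rcases hr with hr | hr
            · exact ⟨aT :: r, Or.inr (by rw [hf, prepend_word bF aT _ _ hr (by decide)])⟩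
            · exact ⟨bF :: r, Or.inr (by rw [hf, prepend_word bF bF _ _ hr (by decide)])⟩
          · exact absurd (by decide) hnc1

lemma qF_one : qF 1 = 0 := by unfold qF; rw [FreeGroup.toWord_one]; rfl

lemma qF_f0_cases : ∀ (n : ℕ) (u : F₂), u.toWord.length ≤ n →
    qF (f0 u) = qF u ∨ qF (f0 u) = qF u + 1 := by
  intro n
  induction n with
  | zero =>
    intro u h
    have h0 : u.toWord = [] := List.eq_nil_of_length_eq_zero (Nat.le_zero.mp h)
    have : u = 1 := FreeGroup.toWord_eq_nil_iff.mp h0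
    subst this
    left; rw [MonoidHom.map_one]
  | succ n ih =>
    intro u hlen
    rcases hm : u.toWord with _ | ⟨⟨i, s⟩, l⟩
    · have : u = 1 := FreeGroup.toWord_eq_nil_iff.mp hm
      subst this
      left; rw [MonoidHom.map_one]
    · obtain ⟨hu, hu'w⟩ := word_decomp hm
      have hlen' : (FreeGroup.mk l).toWord.length ≤ n := by
        rw [hu'w]; rw [hm] at hlen; simpa using hlen
      have hqu' : qF (FreeGroup.mk l) = qW l := by unfold qF; rw [hu'w]
      fin_cases i <;> cases s <;> simp only [Fin.mk_zero, Fin.mk_one] at hm hu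
      · -- x = aF
        have hq : qF u = 0 := by unfold qF; rw [hm]; exact qW_a _ _
        obtain ⟨r, hr⟩ := (f0_word (n+1) u (by rw [hm] at hlen ⊢; exact hlen)).2.1 ⟨l, hm⟩
        left
        rw [hq]
        unfold qF; rw [hr]; exact qW_a _ _
      · -- x = aT
        have hq : qF u = 0 := by unfold qF; rw [hm]; exact qW_a _ _
        obtain ⟨r, hr⟩ := (f0_word (n+1) u (by rw [hm] at hlen ⊢; exact hlen)).1 ⟨l, hm⟩
        right
        rw [hq]
        unfold qF; rw [hr, qW_bt, qW_a]
      · -- x = bF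
        have hq : qF u = qF (FreeGroup.mk l) - 1 := by
          unfold qF; rw [hm, qW_bf, hu'w]
        have hf : f0 u = (FreeGroup.of (1 : Fin 2))⁻¹ * f0 (FreeGroup.mk l) := by
          rw [hu, MonoidHom.map_mul, f0_MbF, mk_single_false]
        rw [hf, qF_binv_mul, hq]
        rcases ih (FreeGroup.mk l) hlen' with h | h
        · left; omega
        · right; omega
      · -- x = bT
        have hq : qF u = qF (FreeGroup.mk l) + 1 := by
          unfold qF; rw [hm, qW_bt, hu'w]
        have hf : f0 u = FreeGroup.of (1 : Fin 2) * f0 (FreeGroup.mk l) := by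
          rw [hu, MonoidHom.map_mul, f0_MbT, mk_single_true]
        rw [hf, qF_b_mul, hq]
        rcases ih (FreeGroup.mk l) hlen' with h | h
        · left; omega
        · right; omega

lemma qF_f0_le (u : F₂) : |qF (f0 u) - qF u| ≤ 1 := by
  rcases qF_f0_cases u.toWord.length u le_rfl with h | h <;> rw [h] <;> simp

lemma qF_g0_le (u : F₂) : |qF (g0 u) - qF u| ≤ 1 := by
  have h := qF_f0_le (g0 u)
  rw [f0_g0] at h
  rw [abs_sub_comm]
  exact h

def φA : F₂ ≃* F₂ := MonoidHom.toMulEquiv f0 g0 g0_comp_f0 f0_comp_g0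

def ψZ : Multiplicative ℤ →* MulAut F₂ := (zpowersHom (MulAut F₂)) φA

abbrev GSD : Type := SemidirectProduct F₂ (Multiplicative ℤ) ψZ

lemma φA_apply (x : F₂) : φA x = f0 x := rfl

lemma φA_symm_apply (x : F₂) : φA.symm x = g0 x := rfl

lemma ψZ_ofAdd_one : ψZ (Multiplicative.ofAdd (1 : ℤ)) = φA := by
  simp [ψZ, zpowersHom_apply]

def fG : Fin 3 → GSD := fun i =>
  if i = 0 then SemidirectProduct.inl (FreeGroup.of 0)
  else if i = 1 then SemidirectProduct.inl (FreeGroup.of 1)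
  else SemidirectProduct.inr (Multiplicative.ofAdd 1)

lemma fG0 : fG 0 = SemidirectProduct.inl (FreeGroup.of 0) := rfl
lemma fG1 : fG 1 = SemidirectProduct.inl (FreeGroup.of 1) := rfl
lemma fG2 : fG 2 = SemidirectProduct.inr (Multiplicative.ofAdd 1) := rfl

lemma conj_t (nn : F₂) :
    SemidirectProduct.inr (φ := ψZ) (Multiplicative.ofAdd (1 : ℤ)) * SemidirectProduct.inl nn *
      (SemidirectProduct.inr (Multiplicative.ofAdd (1 : ℤ)))⁻¹
      = SemidirectProduct.inl (f0 nn) := by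
  rw [← MonoidHom.map_inv, ← SemidirectProduct.inl_aut, ψZ_ofAdd_one, φA_apply]

lemma hrels_one : ∀ r ∈ hRels, FreeGroup.lift fG r = 1 := by
  intro r hr
  simp only [hRels, Set.mem_insert_iff, Set.mem_singleton_iff] at hr
  rcases hr with rfl | rfl
  · simp only [MonoidHom.map_mul, MonoidHom.map_inv, FreeGroup.lift_apply_of]
    rw [fG2, fG1, conj_t]
    rw [show f0 (FreeGroup.of 1) = FreeGroup.of 1 by simp [f0]]
    rw [← MonoidHom.map_inv, ← MonoidHom.map_mul]
    rw [mul_inv_cancel, MonoidHom.map_one]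
  · simp only [MonoidHom.map_mul, MonoidHom.map_inv, FreeGroup.lift_apply_of]
    rw [fG2, fG1, fG0, conj_t]
    rw [show f0 (FreeGroup.of 0) = FreeGroup.of 1 * FreeGroup.of 0 by simp [f0]]
    rw [← MonoidHom.map_inv, ← MonoidHom.map_inv, ← MonoidHom.map_mul, ← MonoidHom.map_mul]
    rw [show FreeGroup.of (1 : Fin 2) * FreeGroup.of 0 * (FreeGroup.of 0)⁻¹ *
      (FreeGroup.of 1)⁻¹ = (1 : F₂) by group, MonoidHom.map_one]

def ΦH : HGrp →* GSD := PresentedGroup.toGroup hrels_one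

lemma ΦH_a : ΦH aH = SemidirectProduct.inl (FreeGroup.of 0) :=
  PresentedGroup.toGroup.of hrels_one

lemma ΦH_b : ΦH bH = SemidirectProduct.inl (FreeGroup.of 1) :=
  PresentedGroup.toGroup.of hrels_one

lemma ΦH_t : ΦH tH = SemidirectProduct.inr (Multiplicative.ofAdd 1) :=
  PresentedGroup.toGroup.of hrels_one

lemma ΦH_iota (w : F₂) : ΦH (ι w) = SemidirectProduct.inl w := by
  have h : ΦH.comp ι = (SemidirectProduct.inl : F₂ →* GSD) := by
    apply FreeGroup.ext_hom
    intro a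
    fin_cases a
    · show ΦH (ι (FreeGroup.of 0)) = SemidirectProduct.inl (FreeGroup.of 0)
      rw [show ι (FreeGroup.of 0) = aH by simp [ι], ΦH_a]
    · show ΦH (ι (FreeGroup.of 1)) = SemidirectProduct.inl (FreeGroup.of 1)
      rw [show ι (FreeGroup.of 1) = bH by simp [ι], ΦH_b]
  exact DFunLike.congr_fun h w

def π₀ : HGrp → ℤ := fun h => qF (((ψZ (ΦH h).right)⁻¹ : MulAut F₂) (ΦH h).left)

lemma aut_inv_apply (σ : MulAut F₂) (x : F₂) : σ⁻¹ (σ x) = x := by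
  rw [← MulAut.mul_apply, inv_mul_cancel]
  rfl

lemma pi_mul_inl (h s : HGrp) (n₀ : F₂) (hs : ΦH s = SemidirectProduct.inl n₀) :
    π₀ (h * s) = qF ((((ψZ (ΦH h).right)⁻¹ : MulAut F₂) (ΦH h).left) * n₀) := by
  unfold π₀
  rw [MonoidHom.map_mul, hs, SemidirectProduct.mul_right, SemidirectProduct.right_inl, mul_one,
    SemidirectProduct.mul_left, SemidirectProduct.left_inl]
  rw [MulEquiv.map_mul, aut_inv_apply]

lemma pi_mul_inr (h s : HGrp) (g : Multiplicative ℤ) (hs : ΦH s = SemidirectProduct.inr g) :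
    π₀ (h * s)
      = qF (((ψZ g)⁻¹ : MulAut F₂) ((((ψZ (ΦH h).right)⁻¹ : MulAut F₂) (ΦH h).left))) := by
  unfold π₀
  rw [MonoidHom.map_mul, hs, SemidirectProduct.mul_right, SemidirectProduct.right_inr,
    SemidirectProduct.mul_left, SemidirectProduct.left_inr, MulEquiv.map_one, mul_one,
    MonoidHom.map_mul ψZ, mul_inv_rev, MulAut.mul_apply]

lemma qF_noLeadB (w : F₂) (hw : NoLeadB w) : qF w = 0 := by
  unfold qF
  rcases hm : w.toWord with _ | ⟨⟨i, s⟩, t⟩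
  · rfl
  · have hi := hw (i, s) (by rw [hm]; rfl)
    fin_cases i
    · exact qW_a _ _
    · exact absurd rfl hi

lemma psi_inv_e (x : F₂) :
    ((ψZ (Multiplicative.ofAdd (1 : ℤ)))⁻¹ : MulAut F₂) x = g0 x := by
  rw [ψZ_ofAdd_one, MulAut.inv_def, φA_symm_apply]

lemma psi_inv_einv (x : F₂) :
    ((ψZ ((Multiplicative.ofAdd (1 : ℤ))⁻¹))⁻¹ : MulAut F₂) x = f0 x := by
  rw [MonoidHom.map_inv, inv_inv, ψZ_ofAdd_one, φA_apply]

/-- There is a map `π : H → ℤ` reading off the exponent `q` in the normal form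
`t^p · b^q · ι(w)`, and `π` is 1-Lipschitz with respect to the word metric on `{a, b, t}`. -/
theorem exists_pi_lipschitz :
    ∃ π : HGrp → ℤ,
      (∀ (p q : ℤ) (w : F₂), NoLeadB w → π (tH ^ p * bH ^ q * ι w) = q) ∧
      (∀ h : HGrp, ∀ s ∈ ({aH, bH, tH, aH⁻¹, bH⁻¹, tH⁻¹} : Set HGrp),
        |π (h * s) - π h| ≤ 1) := by
  refine ⟨π₀, ?_, ?_⟩
  · intro p q w hw
    have h1 : ΦH (tH ^ p * bH ^ q * ι w)
        = SemidirectProduct.inr ((Multiplicative.ofAdd (1 : ℤ)) ^ p) *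
          SemidirectProduct.inl (FreeGroup.of (1 : Fin 2) ^ q * w) := by
      rw [MonoidHom.map_mul, MonoidHom.map_mul, MonoidHom.map_zpow, MonoidHom.map_zpow,
        ΦH_t, ΦH_b, ΦH_iota, ← MonoidHom.map_zpow SemidirectProduct.inr,
        ← MonoidHom.map_zpow SemidirectProduct.inl,
        mul_assoc, ← MonoidHom.map_mul SemidirectProduct.inl]
    unfold π₀
    rw [h1, SemidirectProduct.mul_right, SemidirectProduct.right_inr,
      SemidirectProduct.right_inl, mul_one, SemidirectProduct.mul_left,
      SemidirectProduct.left_inr, SemidirectProduct.left_inl, one_mul,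
      SemidirectProduct.right_inr, aut_inv_apply, qF_bpow_mul, qF_noLeadB w hw, add_zero]
  · intro h s hs
    simp only [Set.mem_insert_iff, Set.mem_singleton_iff] at hs
    rcases hs with rfl | rfl | rfl | rfl | rfl | rfl
    · rw [pi_mul_inl h aH (FreeGroup.of 0) ΦH_a]
      unfold π₀
      rw [← mk_single_true 0]
      exact qF_mul_single _ _
    · rw [pi_mul_inl h bH (FreeGroup.of 1) ΦH_b]
      unfold π₀
      rw [← mk_single_true 1]
      exact qF_mul_single _ _
    · rw [pi_mul_inr h tH _ ΦH_t, psi_inv_e]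
      unfold π₀
      exact qF_g0_le _
    · have ha : ΦH aH⁻¹ = SemidirectProduct.inl ((FreeGroup.of 0)⁻¹) := by
        rw [MonoidHom.map_inv, ΦH_a, ← MonoidHom.map_inv]
      rw [pi_mul_inl h aH⁻¹ _ ha]
      unfold π₀
      rw [← mk_single_false 0]
      exact qF_mul_single _ _
    · have hb : ΦH bH⁻¹ = SemidirectProduct.inl ((FreeGroup.of 1)⁻¹) := by
        rw [MonoidHom.map_inv, ΦH_b, ← MonoidHom.map_inv]
      rw [pi_mul_inl h bH⁻¹ _ hb]
      unfold π₀
      rw [← mk_single_false 1]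
      exact qF_mul_single _ _
    · have ht : ΦH tH⁻¹ = SemidirectProduct.inr ((Multiplicative.ofAdd (1 : ℤ))⁻¹) := by
        rw [MonoidHom.map_inv, ΦH_t, ← MonoidHom.map_inv]
      rw [pi_mul_inr h tH⁻¹ _ ht, psi_inv_einv]
      unfold π₀
      exact qF_f0_le _
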